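/- Let L be a bounded modular lattice of height d (every chain x₀ < x₁ < … < x_k in L satisfies k ≤ d, and some chain of length d exists), and let ā = (a_⊥, a_⊤, a₁,…,a_d, a₁₂,…,a₁d) be a d-frame in L. If a_i ≠ a_⊥ for some i, then a_j ≠ a_⊥ for all j, a_⊥ = ⊥, a_⊤ = ⊤, and each a_j is an atom of L. -/

import Mathlib

/-- A `d`-frame in a bounded modular lattice (see the paper): `a 0` plays the role of `a₁`,
and `c j` plays the role of `a₁ⱼ` for `j ≠ 0`. -/
def IsDFrame {L : Type*} [Lattice L] [BoundedOrder L] {d : ℕ} [NeZero d]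
    (abot atop : L) (a c : Fin d → L) : Prop :=
  abot ≤ atop ∧
  (∀ i, abot ≤ a i ∧ a i ≤ atop) ∧
  (∀ j, j ≠ 0 → abot ≤ c j ∧ c j ≤ atop) ∧
  (∀ i, a i ⊓ (Finset.univ.erase i).sup a = abot) ∧
  Finset.univ.sup a = atop ∧
  (∀ j, j ≠ 0 →
    a 0 ⊔ c j = a 0 ⊔ a j ∧ a j ⊔ c j = a 0 ⊔ a j ∧
    a 0 ⊓ c j = abot ∧ a j ⊓ c j = abot)

section Aux

variable {L : Type*} [Preorder L]

lemma strictMono_fin_cons {n : ℕ} {x : L} {f : Fin (n + 1) → L}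
    (hf : StrictMono f) (hx : x < f 0) :
    StrictMono (Fin.cons x f : Fin (n + 2) → L) := by
  rw [Fin.strictMono_iff_lt_succ]
  intro i
  refine Fin.cases ?_ (fun j => ?_) i
  · simpa using hx
  · have h : (Fin.succ j).castSucc = (j.castSucc).succ := (Fin.succ_castSucc j).symm
    rw [h, Fin.cons_succ, Fin.cons_succ]
    exact hf (Fin.castSucc_lt_succ (i := j))

lemma strictMono_fin_snoc {n : ℕ} {y : L} {f : Fin (n + 1) → L}
    (hf : StrictMono f) (hy : f (Fin.last n) < y) :
    StrictMono (Fin.snoc f y : Fin (n + 2) → L) := by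
  rw [Fin.strictMono_iff_lt_succ]
  intro i
  refine Fin.lastCases ?_ (fun j => ?_) i
  · rw [Fin.succ_last, Fin.snoc_last, Fin.snoc_castSucc]
    exact hy
  · rw [Fin.succ_castSucc, Fin.snoc_castSucc, Fin.snoc_castSucc]
    exact hf (Fin.castSucc_lt_succ (i := j))

end Aux

lemma frame_chain {L : Type*} [Lattice L] [OrderBot L] {d : ℕ} [NeZero d]
    (abot atop : L) (a : Fin d → L)
    (ha : ∀ i, abot ≤ a i)
    (hind : ∀ i, a i ⊓ (Finset.univ.erase i).sup a = abot)
    (hsup : Finset.univ.sup a = atop)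
    (hne : ∀ j, a j ≠ abot)
    (e : Equiv.Perm (Fin d)) :
    ∃ G : Fin (d + 1) → L, StrictMono G ∧ G 0 = abot ∧ G (Fin.last d) = atop ∧
      G 1 = a (e 0) := by
  set G : Fin (d + 1) → L :=
    fun k => abot ⊔ (Finset.univ.filter fun t : Fin d => (t : ℕ) < (k : ℕ)).sup
      (fun t => a (e t)) with hG
  have hd : 0 < d := Nat.pos_of_ne_zero (NeZero.ne d)
  refine ⟨G, ?_, ?_, ?_, ?_⟩
  · rw [Fin.strictMono_iff_lt_succ]
    intro k
    have hfilter : (Finset.univ.filter fun t : Fin d => (t : ℕ) < (k.succ : ℕ))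
        = insert k (Finset.univ.filter fun t : Fin d => (t : ℕ) < (k.castSucc : ℕ)) := by
      ext t
      simp only [Finset.mem_filter, Finset.mem_insert, Finset.mem_univ, true_and,
        Fin.val_succ, Fin.coe_castSucc, Nat.lt_succ_iff_lt_or_eq]
      constructor
      · rintro (h | h)
        · exact Or.inr h
        · exact Or.inl (Fin.ext h)
      · rintro (h | h)
        · exact Or.inr (h ▸ rfl)
        · exact Or.inl h
    have hsucc : G k.succ = a (e k) ⊔ G k.castSucc := by
      simp only [hG, hfilter, Finset.sup_insert]
      ac_rfl
    have hle : G k.castSucc ≤ G k.succ := by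
      rw [hsucc]; exact le_sup_right
    rcases lt_or_eq_of_le hle with h | h
    · exact h
    exfalso
    have hak : a (e k) ≤ G k.castSucc := by
      rw [hsucc] at h; exact le_sup_left.trans h.symm.le
    by_cases hk : (k : ℕ) = 0
    · have hfil : (Finset.univ.filter fun t : Fin d => (t : ℕ) < ((k.castSucc : Fin (d+1)) : ℕ))
          = ∅ := by
        ext t; simp [hk]
      have h0 : G k.castSucc = abot := by
        rw [hG]; dsimp only; rw [hfil]; simp
      exact hne (e k) (le_antisymm (h0 ▸ hak) (ha _))
    · have hk0 : (0 : Fin d) ≠ k := by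
        intro h; apply hk; rw [← h]; simp
      have hmem0 : e 0 ∈ Finset.univ.erase (e k) :=
        Finset.mem_erase.mpr ⟨e.injective.ne hk0, Finset.mem_univ _⟩
      have hE : G k.castSucc ≤ (Finset.univ.erase (e k)).sup a := by
        apply sup_le
        · exact (ha (e 0)).trans (Finset.le_sup hmem0)
        · apply Finset.sup_le
          intro t ht
          have htk : t ≠ k := by
            intro h; subst h
            simp at ht
          exact Finset.le_sup (Finset.mem_erase.mpr
            ⟨e.injective.ne htk, Finset.mem_univ _⟩)
      have : a (e k) = abot := by
        rw [← hind (e k)]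
        exact le_antisymm (le_inf le_rfl (hak.trans hE)) inf_le_left
      exact hne (e k) this
  · have : (Finset.univ.filter fun t : Fin d => (t : ℕ) < ((0 : Fin (d + 1)) : ℕ))
        = ∅ := by ext t; simp
    simp [hG, this]
  · have : (Finset.univ.filter fun t : Fin d => (t : ℕ) < ((Fin.last d : Fin (d + 1)) : ℕ))
        = Finset.univ := by
      ext t; simp [Fin.is_lt]
    rw [hG]
    simp only [this]
    have himg : Finset.univ.sup (fun t => a (e t)) = Finset.univ.sup a := by
      rw [show (fun t => a (e t)) = a ∘ ⇑e from rfl, ← Finset.sup_image,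
        Finset.image_univ_equiv]
    rw [himg, hsup]
    exact sup_eq_right.mpr ((ha ⟨0, hd⟩).trans
      (hsup ▸ Finset.le_sup (Finset.mem_univ _)))
  · have h1 : ((1 : Fin (d + 1)) : ℕ) = 1 := by
      have : 1 < d + 1 := by omega
      simp [Fin.val_one', Nat.mod_eq_of_lt this]
    have : (Finset.univ.filter fun t : Fin d => (t : ℕ) < ((1 : Fin (d + 1)) : ℕ))
        = {0} := by
      ext t
      simp only [Finset.mem_filter, Finset.mem_univ, true_and, Finset.mem_singleton, h1,
        Nat.lt_one_iff]
      constructor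
      · intro h; exact Fin.ext (by simpa using h)
      · intro h; subst h; simp [Fin.val_zero]
    rw [hG]
    simp only [this, Finset.sup_singleton]
    exact sup_eq_right.mpr (ha _)

theorem stmt_3 {L : Type*} [Lattice L] [BoundedOrder L] [IsModularLattice L]
    (d : ℕ) [NeZero d]
    (hmax : ∀ (k : ℕ) (x : Fin (k + 1) → L), StrictMono x → k ≤ d)
    (hchain : ∃ x : Fin (d + 1) → L, StrictMono x)
    (abot atop : L) (a c : Fin d → L)
    (hframe : IsDFrame abot atop a c)
    (i : Fin d) (hi : a i ≠ abot) :
    (∀ j, a j ≠ abot) ∧ abot = ⊥ ∧ atop = ⊤ ∧ ∀ j, IsAtom (a j) := by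
  obtain ⟨hbt, ha, hc, hind, hsup, hcj⟩ := hframe
  -- Step 1 : a 0 ≠ abot
  have ha0 : a 0 ≠ abot := by
    by_cases h : i = 0
    · exact h ▸ hi
    · intro h0
      obtain ⟨h1, h2, h3, h4⟩ := hcj i h
      have hci : c i = a i := by
        have e1 : a 0 ⊔ c i = c i := by rw [h0]; exact sup_eq_right.mpr (hc i h).1
        have e2 : a 0 ⊔ a i = a i := by rw [h0]; exact sup_eq_right.mpr (ha i).1
        rw [e1, e2] at h1; exact h1
      rw [hci, inf_idem] at h4
      exact hi h4
  -- Step 2 : all a j ≠ abot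
  have hne : ∀ j, a j ≠ abot := by
    intro j
    by_cases h : j = 0
    · exact h ▸ ha0
    · intro hj
      obtain ⟨h1, h2, h3, h4⟩ := hcj j h
      have hcj0 : c j = a 0 := by
        have e1 : a j ⊔ c j = c j := by rw [hj]; exact sup_eq_right.mpr (hc j h).1
        have e2 : a 0 ⊔ a j = a 0 := by rw [hj]; exact sup_eq_left.mpr (ha 0).1
        rw [e1, e2] at h2; exact h2
      rw [hcj0, inf_idem] at h3
      exact ha0 h3
  obtain ⟨G, hGmono, hG0, hGlast, _⟩ :=
    frame_chain abot atop a (fun i => (ha i).1) hind hsup hne 1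
  -- abot = ⊥
  have habot : abot = ⊥ := by
    by_contra h
    have hbotlt : (⊥ : L) < G 0 := hG0 ▸ Ne.bot_lt h
    have := hmax (d + 1) (Fin.cons ⊥ G) (strictMono_fin_cons hGmono hbotlt)
    omega
  -- atop = ⊤
  have hatop : atop = ⊤ := by
    by_contra h
    have htoplt : G (Fin.last d) < ⊤ := hGlast ▸ (Ne.lt_top h)
    have := hmax (d + 1) (Fin.snoc G ⊤) (strictMono_fin_snoc hGmono htoplt)
    omega
  refine ⟨hne, habot, hatop, ?_⟩
  intro j
  constructor
  · exact habot ▸ hne j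
  · intro b hb
    by_contra hb0
    obtain ⟨d', rfl⟩ : ∃ d', d = d' + 1 :=
      ⟨d - 1, (Nat.succ_pred_eq_of_pos (Nat.pos_of_ne_zero (NeZero.ne d))).symm⟩
    obtain ⟨G', hG'mono, hG'0, hG'last, hG'1⟩ :=
      frame_chain abot atop a (fun i => (ha i).1) hind hsup hne (Equiv.swap 0 j)
    have htail : StrictMono (fun t : Fin (d' + 1) => G' t.succ) :=
      hG'mono.comp Fin.strictMono_succ
    have htail0 : G' (Fin.succ (0 : Fin (d' + 1))) = a j := by
      rw [Fin.succ_zero_eq_one', hG'1, Equiv.swap_apply_left]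
    have hblt : b < (fun t : Fin (d' + 1) => G' t.succ) 0 := by
      show b < G' (Fin.succ (0 : Fin (d' + 1))); rw [htail0]; exact hb
    have hchain1 : StrictMono (Fin.cons b (fun t : Fin (d' + 1) => G' t.succ) : Fin (d' + 2) → L) :=
      strictMono_fin_cons htail hblt
    have hb_bot : (⊥ : L) < b := Ne.bot_lt hb0
    have hchain2 : StrictMono
        (Fin.cons ⊥ (Fin.cons b (fun t : Fin (d' + 1) => G' t.succ)) : Fin (d' + 3) → L) :=
      strictMono_fin_cons hchain1 (by rw [Fin.cons_zero]; exact hb_bot)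
    have := hmax (d' + 2) _ hchain2
    omega
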